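/- For real x > 2, the ratio of consecutive Oresme polynomials converges: lim_{n→∞} O_{n+1}(x)/O_n(x) = (x+√(x²−4))/(2x). -/

import Mathlib

noncomputable def oresme : ℕ → ℝ → ℝ
  | 0 => fun _ => 0
  | 1 => fun x => 1/x
  | (n+2) => fun x => oresme (n+1) x - (1/x^2) * oresme n x

theorem oresme_ratio_limit (x : ℝ) (hx : 2 < x) :
    Filter.Tendsto (fun n : ℕ => oresme (n+1) x / oresme n x) Filter.atTop
      (nhds ((x + Real.sqrt (x^2 - 4)) / (2*x))) := by
  have hx0 : (0:ℝ) < x := by linarith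
  set s := Real.sqrt (x^2 - 4) with hs_def
  have hs2 : s^2 = x^2 - 4 := Real.sq_sqrt (by nlinarith)
  have hs_pos : 0 < s := Real.sqrt_pos.mpr (by nlinarith)
  have hs_lt : s < x := by nlinarith
  set a := (x + s) / (2*x) with ha_def
  set b := (x - s) / (2*x) with hb_def
  have ha_pos : 0 < a := by positivity
  have hb_pos : 0 < b := div_pos (by linarith) (by linarith)
  have hba : b < a := (div_lt_div_iff_of_pos_right (by linarith)).mpr (by linarith)
  have ha : a^2 = a - 1/x^2 := by
    rw [ha_def]; field_simp; linear_combination hs2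
  have hb : b^2 = b - 1/x^2 := by
    rw [hb_def]; field_simp; linear_combination hs2
  clear_value s a b
  -- closed form
  have hcf : ∀ n, oresme n x = (a^n - b^n) / s := by
    intro n
    induction n using Nat.twoStepInduction with
    | zero => simp [oresme]
    | one =>
      simp only [oresme, pow_one]
      rw [ha_def, hb_def]
      field_simp
      ring
    | more n ih1 ih2 =>
      show oresme (n+1) x - (1/x^2) * oresme n x = _
      rw [ih1, ih2]
      have hsne : s ≠ 0 := ne_of_gt hs_pos
      linear_combination (-(a^n)/s) * ha + (b^n/s) * hb
  set q := b / a with hq_def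
  have hq0 : 0 ≤ q := le_of_lt (div_pos hb_pos ha_pos)
  have hq1 : q < 1 := (div_lt_one ha_pos).mpr hba
  have hqlim : Filter.Tendsto (fun n : ℕ => q^n) Filter.atTop (nhds 0) :=
    tendsto_pow_atTop_nhds_zero_of_lt_one hq0 hq1
  have hlim : Filter.Tendsto (fun n : ℕ => (a - b * q^n) / (1 - q^n))
      Filter.atTop (nhds a) := by
    have h1 : Filter.Tendsto (fun n : ℕ => a - b * q^n) Filter.atTop (nhds (a - b * 0)) :=
      tendsto_const_nhds.sub (tendsto_const_nhds.mul hqlim)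
    have h2 : Filter.Tendsto (fun n : ℕ => 1 - q^n) Filter.atTop (nhds (1 - 0)) :=
      tendsto_const_nhds.sub hqlim
    have := h1.div h2 (by norm_num)
    simp at this; exact this
  have key : Filter.Tendsto (fun n : ℕ => oresme (n+1) x / oresme n x)
      Filter.atTop (nhds a) := by
    refine hlim.congr' ?_
    filter_upwards [Filter.eventually_ge_atTop 1] with n hn
    have hne : n ≠ 0 := by omega
    have hpow : b^n < a^n := pow_lt_pow_left₀ hba (le_of_lt hb_pos) hne
    have hane : a ≠ 0 := ne_of_gt ha_pos
    have hdne : a^n - b^n ≠ 0 := sub_ne_zero_of_ne (ne_of_gt hpow)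
    have hqne : 1 - q^n ≠ 0 := by
      have : q^n < 1 := pow_lt_one₀ hq0 hq1 hne
      linarith
    have hane' : a^n ≠ 0 := pow_ne_zero _ hane
    have hsne : s ≠ 0 := ne_of_gt hs_pos
    rw [hcf, hcf, hq_def, div_pow]
    rw [div_div_div_eq, mul_comm s, mul_div_mul_right _ _ hsne]
    rw [eq_div_iff hdne]
    field_simp
    ring
  exact key
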